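/- If μ is a noncrossing forest on a point configuration P with convex geodesics, then the partition Part(μ) of P whose blocks are the vertex sets of the connected components of μ is a noncrossing partition: the convex hulls of distinct blocks are disjoint. -/

import Mathlib

open scoped Classical

/-- The vertex type of a finite point configuration `P ⊆ ℂ`. -/
abbrev Vtx (P : Finset ℂ) := {z : ℂ // z ∈ P}

/-- The block (as a set of points of the plane) of the partition `s` containing `a`. -/
def cblock {P : Finset ℂ} (s : Setoid (Vtx P)) (a : Vtx P) : Set ℂ :=
  {w : ℂ | ∃ b : Vtx P, s.r a b ∧ w = ↑b}

/-- A partition (setoid) of the points of `P` is noncrossing if the convex hulls of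
distinct blocks are pairwise disjoint. -/
def NoncrossingS (P : Finset ℂ) (s : Setoid (Vtx P)) : Prop :=
  ∀ a b : Vtx P, ¬ s.r a b →
    Disjoint (convexHull ℝ (cblock s a)) (convexHull ℝ (cblock s b))

/-- `P` is a hull configuration: no point of `P` lies in the interior of the convex hull
(this includes the degenerate case of a collinear configuration, whose hull has empty
interior). -/
def IsHullConfig (P : Finset ℂ) : Prop :=
  ∀ z ∈ P, z ∉ interior (convexHull ℝ (↑P : Set ℂ))

/-- The number of blocks of a partition of the points of `P`. -/
noncomputable def numBlocks {P : Finset ℂ} (s : Setoid (Vtx P)) : ℕ :=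
  Set.ncard {C : Set (Vtx P) | ∃ a, C = {b | s.r a b}}

/-- The rank of a partition in `NC(P)`: `|P|` minus the number of blocks. -/
noncomputable def rkNC {P : Finset ℂ} (s : Setoid (Vtx P)) : ℕ := P.card - numBlocks s

/-- The partition of the points of `P` into connected components of the graph `H`. -/
def partOf {P : Finset ℂ} (H : SimpleGraph (Vtx P)) : Setoid (Vtx P) :=
  ⟨fun a b => H.Reachable a b,
   ⟨fun a => SimpleGraph.Reachable.refl a, fun h => h.symm, fun h h' => h.trans h'⟩⟩

/-- `Bool(τ)`: the set of partitions `Part(μ)` of subforests (subgraphs) `μ ⊆ τ`. -/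
def boolOf {P : Finset ℂ} (G : SimpleGraph (Vtx P)) : Set (Setoid (Vtx P)) :=
  {s | ∃ H ≤ G, s = partOf H}

/-- The straight-line edges of `G` are pairwise noncrossing: two distinct edges meet
at most in common endpoints. -/
def EdgesNoncrossing (P : Finset ℂ) (G : SimpleGraph (Vtx P)) : Prop :=
  ∀ a b c d : Vtx P, G.Adj a b → G.Adj c d →
    ({a, b} : Set (Vtx P)) ≠ {c, d} →
    ∀ x ∈ segment ℝ (a : ℂ) (b : ℂ) ∩ segment ℝ (c : ℂ) (d : ℂ),
      (x = ↑a ∨ x = ↑b) ∧ (x = ↑c ∨ x = ↑d)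

/-- `G` has convex geodesics: for every connected subgraph (subtree), the convex hull of
its vertices contains no points of `P` other than those vertices. -/
def ConvexGeodesics (P : Finset ℂ) (G : SimpleGraph (Vtx P)) : Prop :=
  ∀ S : Set (Vtx P), (G.induce S).Connected →
    ∀ v : Vtx P, (v : ℂ) ∈ convexHull ℝ (Subtype.val '' S) → v ∈ S

/-- A noncrossing (spanning) tree on `P` with convex geodesics. -/
def IsNCTree (P : Finset ℂ) (G : SimpleGraph (Vtx P)) : Prop :=
  G.IsTree ∧ EdgesNoncrossing P G ∧ ConvexGeodesics P G

noncomputable section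

namespace NCF

/-- 2x2 determinant of two complex numbers viewed as plane vectors. -/
def xdet (p q : ℂ) : ℝ := p.re * q.im - p.im * q.re

lemma smul_c_re (r : ℝ) (z : ℂ) : (r • z).re = r * z.re := by
  simp [Complex.real_smul]
lemma smul_c_im (r : ℝ) (z : ℂ) : (r • z).im = r * z.im := by
  simp [Complex.real_smul]

lemma xdet_self (p : ℂ) : xdet p p = 0 := by simp [xdet, mul_comm]

/-- Barycentric coordinates w.r.t. the triangle `u v w`. -/
def Bc (u v w x : ℂ) : ℝ := xdet (x - u) (w - u) / xdet (v - u) (w - u)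
def Cc (u v w x : ℂ) : ℝ := xdet (v - u) (x - u) / xdet (v - u) (w - u)
def Ac (u v w x : ℂ) : ℝ := 1 - Bc u v w x - Cc u v w x

variable {u v w : ℂ}

lemma cramer_poly (u v w x : ℂ) :
    xdet (x - u) (w - u) • (v - u) + xdet (v - u) (x - u) • (w - u)
      = xdet (v - u) (w - u) • (x - u) := by
  apply Complex.ext <;>
    simp only [smul_c_re, smul_c_im, xdet, Complex.add_re, Complex.add_im,
      Complex.sub_re, Complex.sub_im] <;> ring

lemma cramer (hd : xdet (v - u) (w - u) ≠ 0) (x : ℂ) :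
    x = Ac u v w x • u + Bc u v w x • v + Cc u v w x • w := by
  have h1 : Ac u v w x • u + Bc u v w x • v + Cc u v w x • w
      = u + (Bc u v w x • (v - u) + Cc u v w x • (w - u)) := by
    simp only [Ac, Complex.real_smul]; push_cast; ring
  have h2 : Bc u v w x • (v - u) + Cc u v w x • (w - u) = x - u := by
    rw [Bc, Cc, div_eq_inv_mul, div_eq_inv_mul, ← smul_smul, ← smul_smul, ← smul_add,
      cramer_poly u v w x, smul_smul, inv_mul_cancel₀ hd, one_smul]
  rw [h1, h2]
  ring

lemma combo_sub (aθ bθ : ℝ) (h : aθ + bθ = 1) (x y u : ℂ) :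
    aθ • x + bθ • y - u = aθ • (x - u) + bθ • (y - u) := by
  have : (aθ : ℂ) + (bθ : ℂ) = 1 := by
    rw [← Complex.ofReal_add, h, Complex.ofReal_one]
  simp only [Complex.real_smul]
  linear_combination (u : ℂ) * this

lemma xdet_comb_left (aθ bθ : ℝ) (p q r : ℂ) :
    xdet (aθ • p + bθ • q) r = aθ * xdet p r + bθ * xdet q r := by
  simp only [xdet, Complex.add_re, Complex.add_im, smul_c_re, smul_c_im]; ring

lemma xdet_comb_right (aθ bθ : ℝ) (p q r : ℂ) :
    xdet r (aθ • p + bθ • q) = aθ * xdet r p + bθ * xdet r q := by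
  simp only [xdet, Complex.add_re, Complex.add_im, smul_c_re, smul_c_im]; ring

lemma Bc_affine {aθ bθ : ℝ} (h : aθ + bθ = 1) (x y : ℂ) :
    Bc u v w (aθ • x + bθ • y) = aθ * Bc u v w x + bθ * Bc u v w y := by
  simp only [Bc, combo_sub aθ bθ h, xdet_comb_left]; ring

lemma Cc_affine {aθ bθ : ℝ} (h : aθ + bθ = 1) (x y : ℂ) :
    Cc u v w (aθ • x + bθ • y) = aθ * Cc u v w x + bθ * Cc u v w y := by
  simp only [Cc, combo_sub aθ bθ h, xdet_comb_right]; ring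

lemma Ac_affine {aθ bθ : ℝ} (h : aθ + bθ = 1) (x y : ℂ) :
    Ac u v w (aθ • x + bθ • y) = aθ * Ac u v w x + bθ * Ac u v w y := by
  simp only [Ac, Bc_affine h, Cc_affine h]; linarith

lemma Bc_u : Bc u v w u = 0 := by simp [Bc, xdet]
lemma Bc_v (hd : xdet (v - u) (w - u) ≠ 0) : Bc u v w v = 1 := div_self hd
lemma Bc_w : Bc u v w w = 0 := by simp [Bc, xdet_self]
lemma Cc_u : Cc u v w u = 0 := by simp [Cc, xdet]
lemma Cc_v : Cc u v w v = 0 := by simp [Cc, xdet_self]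
lemma Cc_w (hd : xdet (v - u) (w - u) ≠ 0) : Cc u v w w = 1 := div_self hd
lemma Ac_u (hd : xdet (v - u) (w - u) ≠ 0) : Ac u v w u = 1 := by
  simp [Ac, Bc_u, Cc_u]
lemma Ac_v (hd : xdet (v - u) (w - u) ≠ 0) : Ac u v w v = 0 := by
  simp [Ac, Bc_v hd, Cc_v]
lemma Ac_w (hd : xdet (v - u) (w - u) ≠ 0) : Ac u v w w = 0 := by
  simp [Ac, Bc_w, Cc_w hd]

lemma convex_coordset (f : ℂ → ℝ)
    (hf : ∀ (aθ bθ : ℝ), aθ + bθ = 1 → ∀ x y : ℂ, f (aθ • x + bθ • y) = aθ * f x + bθ * f y) :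
    Convex ℝ {x : ℂ | 0 ≤ f x} := by
  intro x hx y hy aθ bθ ha hb hab
  have := hf aθ bθ hab x y
  simp only [Set.mem_setOf_eq] at *
  rw [this]
  positivity

/-- Hull of a triangle = nonnegative barycentric coordinates. -/
lemma hull3_subset (hd : xdet (v - u) (w - u) ≠ 0) :
    convexHull ℝ ({u, v, w} : Set ℂ) ⊆
      {x | 0 ≤ Ac u v w x ∧ 0 ≤ Bc u v w x ∧ 0 ≤ Cc u v w x} := by
  apply convexHull_min
  · rintro p (rfl | rfl | rfl)
    · simp [Ac_u hd, Bc_u, Cc_u]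
    · simp [Ac_v hd, Bc_v hd, Cc_v]
    · simp [Ac_w hd, Bc_w, Cc_w hd]
  · have h1 := convex_coordset (Ac u v w) (fun a b h x y => Ac_affine h x y)
    have h2 := convex_coordset (Bc u v w) (fun a b h x y => Bc_affine h x y)
    have h3 := convex_coordset (Cc u v w) (fun a b h x y => Cc_affine h x y)
    have : {x : ℂ | 0 ≤ Ac u v w x ∧ 0 ≤ Bc u v w x ∧ 0 ≤ Cc u v w x}
        = {x | 0 ≤ Ac u v w x} ∩ ({x | 0 ≤ Bc u v w x} ∩ {x | 0 ≤ Cc u v w x}) := by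
      ext x; simp [and_assoc]
    rw [this]
    exact h1.inter (h2.inter h3)

lemma mem_hull3 {A B C : ℝ} (hA : 0 ≤ A) (hB : 0 ≤ B) (hC : 0 ≤ C) (hs : A + B + C = 1) :
    A • u + B • v + C • w ∈ convexHull ℝ ({u, v, w} : Set ℂ) := by
  by_cases hBC : B + C = 0
  · have hB0 : B = 0 := by linarith
    have hC0 : C = 0 := by linarith
    have hA1 : A = 1 := by linarith
    simp only [hB0, hC0, hA1, one_smul, zero_smul, add_zero]
    exact subset_convexHull ℝ _ (by simp)
  · have hBC' : 0 < B + C := lt_of_le_of_ne (by linarith) (Ne.symm hBC)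
    set y := (B / (B + C)) • v + (C / (B + C)) • w with hy
    have hymem : y ∈ segment ℝ v w :=
      ⟨B / (B + C), C / (B + C), by positivity, by positivity, by field_simp, rfl⟩
    have hx : A • u + B • v + C • w = A • u + (B + C) • y := by
      rw [hy, smul_add, smul_smul, smul_smul]
      rw [mul_div_cancel₀ _ hBC, mul_div_cancel₀ _ hBC, add_assoc]
    rw [hx]
    have hseg : A • u + (B + C) • y ∈ segment ℝ u y :=
      ⟨A, B + C, hA, le_of_lt hBC', by linarith, rfl⟩
    have : segment ℝ u y ⊆ convexHull ℝ ({u, v, w} : Set ℂ) := by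
      apply (convex_convexHull ℝ _).segment_subset
      · exact subset_convexHull ℝ _ (by simp)
      · have : segment ℝ v w ⊆ convexHull ℝ ({u, v, w} : Set ℂ) := by
          rw [← convexHull_pair]
          exact convexHull_mono (by intro z hz; simp at hz; rcases hz with rfl | rfl <;> simp)
        exact this hymem
    exact this hseg

lemma hull3_eq (hd : xdet (v - u) (w - u) ≠ 0) :
    convexHull ℝ ({u, v, w} : Set ℂ) =
      {x | 0 ≤ Ac u v w x ∧ 0 ≤ Bc u v w x ∧ 0 ≤ Cc u v w x} := by
  apply Set.Subset.antisymm (hull3_subset hd)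
  rintro x ⟨hA, hB, hC⟩
  have hs : Ac u v w x + Bc u v w x + Cc u v w x = 1 := by simp [Ac]; ring
  have := mem_hull3 (u := u) (v := v) (w := w) hA hB hC hs
  rwa [← cramer hd x] at this

lemma coords_continuous (hd : xdet (v - u) (w - u) ≠ 0) :
    Continuous (Ac u v w) ∧ Continuous (Bc u v w) ∧ Continuous (Cc u v w) := by
  have hB : Continuous (Bc u v w) := by
    unfold Bc xdet
    fun_prop
  have hC : Continuous (Cc u v w) := by
    unfold Cc xdet
    fun_prop
  exact ⟨by unfold Ac; fun_prop, hB, hC⟩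

lemma mem_interior_of_pos (hd : xdet (v - u) (w - u) ≠ 0) {x : ℂ}
    (hA : 0 < Ac u v w x) (hB : 0 < Bc u v w x) (hC : 0 < Cc u v w x) :
    x ∈ interior (convexHull ℝ ({u, v, w} : Set ℂ)) := by
  obtain ⟨cA, cB, cC⟩ := coords_continuous hd
  have hopen : IsOpen {y : ℂ | 0 < Ac u v w y ∧ 0 < Bc u v w y ∧ 0 < Cc u v w y} := by
    exact (isOpen_lt continuous_const cA).inter
      ((isOpen_lt continuous_const cB).inter (isOpen_lt continuous_const cC))
  apply interior_maximal _ hopen ⟨hA, hB, hC⟩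
  intro y ⟨h1, h2, h3⟩
  rw [hull3_eq hd]
  exact ⟨le_of_lt h1, le_of_lt h2, le_of_lt h3⟩

lemma coords_sum (u v w x : ℂ) : Ac u v w x + Bc u v w x + Cc u v w x = 1 := by
  simp only [Ac]; ring

lemma combo_param (p0 d : ℂ) {aθ bθ : ℝ} (h : aθ + bθ = 1) (r1 r2 : ℝ) :
    aθ • (p0 + r1 • d) + bθ • (p0 + r2 • d) = p0 + (aθ * r1 + bθ * r2) • d := by
  have hc : (aθ : ℂ) + (bθ : ℂ) = 1 := by rw [← Complex.ofReal_add, h, Complex.ofReal_one]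
  simp only [Complex.real_smul]
  push_cast
  linear_combination p0 * hc

lemma smul_cancel {d : ℂ} (hd : d ≠ 0) {r1 r2 : ℝ} (h : r1 • d = r2 • d) : r1 = r2 := by
  have : (r1 - r2) • d = 0 := by rw [sub_smul, h, sub_self]
  rcases smul_eq_zero.mp this with h' | h'
  · linarith [h']
  · exact absurd h' hd

lemma seg_param_mem2 (p0 d : ℂ) {p q r : ℝ} (h1 : p ≤ r) (h2 : r ≤ q) :
    p0 + r • d ∈ segment ℝ (p0 + p • d) (p0 + q • d) := by
  by_cases hpq : p = q
  · have : r = p := le_antisymm (hpq ▸ h2) h1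
    rw [this, hpq]
    exact right_mem_segment _ _ _
  · have hlt : p < q := lt_of_le_of_ne (h1.trans h2) hpq
    have hqp : q - p > 0 := by linarith
    refine ⟨(q - r) / (q - p), (r - p) / (q - p), div_nonneg (by linarith) (by linarith),
      div_nonneg (by linarith) (by linarith), ?_, ?_⟩
    · field_simp; ring
    · rw [combo_param p0 d (by field_simp; ring)]
      congr 1
      congr 1
      field_simp
      ring

lemma seg_param_mem_uIcc (p0 d : ℂ) {p q r : ℝ} (h : r ∈ Set.uIcc p q) :
    p0 + r • d ∈ segment ℝ (p0 + p • d) (p0 + q • d) := by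
  rcases le_total p q with hle | hle
  · rw [Set.uIcc_of_le hle] at h
    exact seg_param_mem2 p0 d h.1 h.2
  · rw [Set.uIcc_of_ge hle] at h
    rw [segment_symm]
    exact seg_param_mem2 p0 d h.1 h.2

lemma seg_extract {a b z : ℂ} (h : z ∈ segment ℝ a b) :
    ∃ θ : ℝ, 0 ≤ θ ∧ θ ≤ 1 ∧ z = (1 - θ) • a + θ • b := by
  rw [segment_eq_image] at h
  obtain ⟨θ, hθ, hz⟩ := h
  exact ⟨θ, hθ.1, hθ.2, hz.symm⟩

lemma seg_enter {K : Set ℂ} (hK : IsClosed K) {s z : ℂ} (hz : z ∈ K) (hs : s ∉ K) :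
    ∃ y ∈ segment ℝ s z, y ∈ frontier K := by
  set g : ℝ → ℂ := fun l => (1 - l) • s + l • z with hg
  have hgc : Continuous g := by
    rw [hg]; fun_prop
  set L : Set ℝ := Set.Icc (0 : ℝ) 1 ∩ g ⁻¹' K with hLdef
  have hLc : IsClosed L := isClosed_Icc.inter (hK.preimage hgc)
  have hne : L.Nonempty := ⟨1, ⟨zero_le_one, le_refl 1⟩, by simp [hg, hz]⟩
  have hbdd : BddBelow L := ⟨0, fun x hx => hx.1.1⟩
  set l0 := sInf L with hl0def
  have hl0 : l0 ∈ L := hLc.csInf_mem hne hbdd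
  have hl00 : 0 ≤ l0 := hl0.1.1
  have hl01 : l0 ≤ 1 := hl0.1.2
  have hl0pos : 0 < l0 := by
    rcases lt_or_eq_of_le hl00 with h | h
    · exact h
    · exfalso; apply hs
      have h2 : g l0 ∈ K := hl0.2
      rw [← h] at h2
      simpa [hg] using h2
  refine ⟨g l0, ?_, ?_⟩
  · rw [segment_eq_image]
    exact ⟨l0, ⟨hl00, hl01⟩, rfl⟩
  · rw [frontier_eq_closure_inter_closure]
    refine ⟨subset_closure hl0.2, ?_⟩
    rw [mem_closure_iff]
    intro o ho hgo
    obtain ⟨ε, hε, hball⟩ := Metric.isOpen_iff.mp (ho.preimage hgc) l0 hgo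
    set l := max 0 (l0 - ε / 2) with hldef
    have hll0 : l < l0 := by
      apply max_lt hl0pos; linarith
    have hlball : l ∈ Metric.ball l0 ε := by
      rw [Metric.mem_ball, Real.dist_eq, abs_lt]
      constructor
      · have : l0 - ε / 2 ≤ l := le_max_right _ _
        linarith
      · linarith
    have hlnL : l ∉ L := fun hmem => absurd (csInf_le hbdd hmem) (not_le.mpr hll0)
    have hlK : g l ∉ K := by
      intro hk
      exact hlnL ⟨⟨le_max_left _ _, by linarith⟩, hk⟩
    exact ⟨g l, hball hlball, hlK⟩

lemma xdet_zero_param {p q : ℂ} (hq : q ≠ 0) (h : xdet p q = 0) : ∃ r : ℝ, p = r • q := by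
  have hq' : q.re ^ 2 + q.im ^ 2 ≠ 0 := by
    intro h0
    apply hq
    have h1 : q.re = 0 := by nlinarith [sq_nonneg q.re, sq_nonneg q.im]
    have h2 : q.im = 0 := by nlinarith [sq_nonneg q.re, sq_nonneg q.im]
    exact Complex.ext h1 h2
  refine ⟨(p.re * q.re + p.im * q.im) / (q.re ^ 2 + q.im ^ 2), ?_⟩
  simp only [xdet] at h
  apply Complex.ext <;> simp only [smul_c_re, smul_c_im] <;> field_simp
  · linear_combination q.im * h
  · linear_combination (- q.re) * h

lemma mem_seg_param {u w : ℂ} {z : ℂ} (h : z ∈ segment ℝ u w) :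
    ∃ θ : ℝ, 0 ≤ θ ∧ θ ≤ 1 ∧ z = u + θ • (w - u) := by
  obtain ⟨θ, h0, h1, hz⟩ := seg_extract h
  refine ⟨θ, h0, h1, ?_⟩
  rw [hz]
  simp only [Complex.real_smul]
  push_cast
  ring

lemma param_mem_seg {u w : ℂ} {θ : ℝ} (h0 : 0 ≤ θ) (h1 : θ ≤ 1) :
    u + θ • (w - u) ∈ segment ℝ u w := by
  refine ⟨1 - θ, θ, by linarith, h0, by ring, ?_⟩
  simp only [Complex.real_smul]
  push_cast
  ring

lemma oned {u w s t z : ℂ} (huw : u ≠ w)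
    (hsl : xdet (s - u) (w - u) = 0) (htl : xdet (t - u) (w - u) = 0)
    (hz1 : z ∈ segment ℝ u w) (hz2 : z ∈ segment ℝ s t)
    (hs : s ∉ segment ℝ u w) (ht : t ∉ segment ℝ u w) : u ∈ segment ℝ s t := by
  set d := w - u with hd_def
  have hd : d ≠ 0 := sub_ne_zero.mpr (Ne.symm huw)
  obtain ⟨rs, hrs⟩ := xdet_zero_param hd hsl
  obtain ⟨rt, hrt⟩ := xdet_zero_param hd htl
  have hseq : s = u + rs • d := by rw [← hrs]; ring
  have hteq : t = u + rt • d := by rw [← hrt]; ring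
  obtain ⟨θ, hθ0, hθ1, hzeq⟩ := mem_seg_param hz1
  obtain ⟨μ, hμ0, hμ1, hzeq2⟩ := seg_extract hz2
  have hz3 : z = u + ((1 - μ) * rs + μ * rt) • d := by
    rw [hzeq2, hseq, hteq, combo_param u d (by ring)]
  have hcan : θ = (1 - μ) * rs + μ * rt := by
    apply smul_cancel hd
    have := hzeq.symm.trans hz3
    exact add_left_cancel this
  have hrs' : ¬ (0 ≤ rs ∧ rs ≤ 1) := by
    intro ⟨h1, h2⟩
    exact hs (hseq ▸ param_mem_seg h1 h2)
  have hrt' : ¬ (0 ≤ rt ∧ rt ≤ 1) := by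
    intro ⟨h1, h2⟩
    exact ht (hteq ▸ param_mem_seg h1 h2)
  push_neg at hrs' hrt'
  -- case analysis
  have key : (rs < 0 ∧ 1 < rt) ∨ (rt < 0 ∧ 1 < rs) := by
    rcases lt_or_ge rs 0 with h1 | h1 <;> rcases lt_or_ge rt 0 with h2 | h2
    · exfalso
      have e1 : (1 - μ) * rs ≤ 0 := mul_nonpos_iff.mpr (Or.inl ⟨by linarith, by linarith⟩)
      have e2 : μ * rt ≤ 0 := mul_nonpos_iff.mpr (Or.inl ⟨by linarith, by linarith⟩)
      have h10 : (1 - μ) * rs = 0 := by linarith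
      have h20 : μ * rt = 0 := by linarith
      rcases mul_eq_zero.mp h10 with hh | hh
      · rcases mul_eq_zero.mp h20 with hh' | hh' <;> linarith
      · linarith
    · left; exact ⟨h1, hrt' h2⟩
    · right; exact ⟨h2, hrs' h1⟩
    · exfalso
      have hrs1 := hrs' h1
      have hrt1 := hrt' h2
      have e1 : 0 ≤ (1 - μ) * (rs - 1) := mul_nonneg (by linarith) (by linarith)
      have e2 : 0 ≤ μ * (rt - 1) := mul_nonneg hμ0 (by linarith)
      have e3 : (1 - μ) * (rs - 1) + μ * (rt - 1) = θ - 1 := by linear_combination -hcan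
      have h10 : (1 - μ) * (rs - 1) = 0 := by linarith
      have h20 : μ * (rt - 1) = 0 := by linarith
      rcases mul_eq_zero.mp h10 with hh | hh
      · rcases mul_eq_zero.mp h20 with hh' | hh' <;> linarith
      · linarith
  have hsub : rs - rt ≠ 0 := by
    intro hc
    rcases key with ⟨h1, h2⟩ | ⟨h1, h2⟩ <;> linarith
  set θm := rs / (rs - rt) with hθm
  have hrem : 1 - θm = (-rt) / (rs - rt) := by
    rw [hθm]
    field_simp
    ring
  have hθm0 : 0 ≤ θm := by
    rw [hθm]
    rcases key with ⟨h1, h2⟩ | ⟨h1, h2⟩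
    · exact div_nonneg_iff.mpr (Or.inr ⟨by linarith, by linarith⟩)
    · exact div_nonneg_iff.mpr (Or.inl ⟨by linarith, by linarith⟩)
  have hθm1 : θm ≤ 1 := by
    have : 0 ≤ 1 - θm := by
      rw [hrem]
      rcases key with ⟨h1, h2⟩ | ⟨h1, h2⟩
      · exact div_nonneg_iff.mpr (Or.inr ⟨by linarith, by linarith⟩)
      · exact div_nonneg_iff.mpr (Or.inl ⟨by linarith, by linarith⟩)
    linarith
  refine ⟨1 - θm, θm, by linarith, hθm0, by ring, ?_⟩
  rw [hseq, hteq, combo_param u d (by ring)]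
  have : (1 - θm) * rs + θm * rt = 0 := by
    rw [hθm]
    field_simp
    ring
  rw [this]
  simp

lemma xdet_zero_collinear {u v w : ℂ} (h : xdet (v - u) (w - u) = 0) :
    Collinear ℝ ({u, v, w} : Set ℂ) := by
  by_cases hvu : v - u = 0
  · have hv : v = u := sub_eq_zero.mp hvu
    rw [hv, Set.insert_idem]
    exact collinear_pair ℝ u w
  · have h2 : xdet (w - u) (v - u) = 0 := by
      simp only [xdet] at h ⊢
      linarith
    obtain ⟨r, hr⟩ := xdet_zero_param hvu h2
    apply (collinear_iff_of_mem (Set.mem_insert u ({v, w} : Set ℂ))).mpr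
    refine ⟨v - u, fun p hp => ?_⟩
    rcases hp with rfl | rfl | rfl
    · exact ⟨0, by simp⟩
    · exact ⟨1, by simp⟩
    · exact ⟨r, by rw [vadd_eq_add, ← hr]; ring⟩

lemma collinear_hull_sub {u v w : ℂ} (h : Collinear ℝ ({u, v, w} : Set ℂ)) :
    convexHull ℝ ({u, v, w} : Set ℂ) ⊆
      segment ℝ u v ∪ segment ℝ v w ∪ segment ℝ u w := by
  rcases h.wbtw_or_wbtw_or_wbtw with h1 | h2 | h3
  · have hsub : convexHull ℝ ({u, v, w} : Set ℂ) ⊆ segment ℝ u w := by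
      apply convexHull_min _ (convex_segment u w)
      rintro p (rfl | rfl | rfl)
      · exact left_mem_segment _ _ _
      · exact h1.mem_segment
      · exact right_mem_segment _ _ _
    exact fun x hx => Or.inr (hsub hx)
  · have hsub : convexHull ℝ ({u, v, w} : Set ℂ) ⊆ segment ℝ v u := by
      apply convexHull_min _ (convex_segment v u)
      rintro p (rfl | rfl | rfl)
      · exact right_mem_segment _ _ _
      · exact left_mem_segment _ _ _
      · exact h2.mem_segment
    exact fun x hx => Or.inl (Or.inl (segment_symm ℝ v u ▸ hsub hx))
  · have hsub : convexHull ℝ ({u, v, w} : Set ℂ) ⊆ segment ℝ w v := by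
      apply convexHull_min _ (convex_segment w v)
      rintro p (rfl | rfl | rfl)
      · exact h3.mem_segment
      · exact right_mem_segment _ _ _
      · exact left_mem_segment _ _ _
    exact fun x hx => Or.inl (Or.inr (segment_symm ℝ w v ▸ hsub hx))

lemma hull3_closed (u v w : ℂ) : IsClosed (convexHull ℝ ({u, v, w} : Set ℂ)) :=
  (((Set.finite_singleton w).insert v |>.insert u).isCompact_convexHull ℝ).isClosed

lemma frontier_tri (u v w : ℂ) :
    frontier (convexHull ℝ ({u, v, w} : Set ℂ)) ⊆
      segment ℝ u v ∪ segment ℝ v w ∪ segment ℝ u w := by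
  have hclosed := hull3_closed u v w
  by_cases hd : xdet (v - u) (w - u) = 0
  · intro y hy
    exact collinear_hull_sub (xdet_zero_collinear hd)
      (hclosed.closure_eq ▸ frontier_subset_closure hy)
  · intro y hy
    have hyT : y ∈ convexHull ℝ ({u, v, w} : Set ℂ) :=
      hclosed.closure_eq ▸ frontier_subset_closure hy
    obtain ⟨hA, hB, hC⟩ := hull3_subset hd hyT
    have hni : y ∉ interior (convexHull ℝ ({u, v, w} : Set ℂ)) := hy.2
    have hsum := coords_sum u v w y
    rcases lt_or_eq_of_le hA with hA' | hA'
    · rcases lt_or_eq_of_le hB with hB' | hB'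
      · rcases lt_or_eq_of_le hC with hC' | hC'
        · exact absurd (mem_interior_of_pos hd hA' hB' hC') hni
        · -- Cc = 0 : y ∈ segment u v
          left; left
          have hy2 := cramer hd y
          rw [← hC', zero_smul, add_zero] at hy2
          exact ⟨Ac u v w y, Bc u v w y, le_of_lt hA', le_of_lt hB', by linarith, hy2.symm⟩
      · -- Bc = 0 : y ∈ segment u w
        right
        have hy2 := cramer hd y
        rw [← hB', zero_smul, add_zero] at hy2
        exact ⟨Ac u v w y, Cc u v w y, le_of_lt hA', hC, by linarith, hy2.symm⟩
    · -- Ac = 0 : y ∈ segment v w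
      left; right
      have hy2 := cramer hd y
      rw [← hA', zero_smul, zero_add] at hy2
      exact ⟨Bc u v w y, Cc u v w y, hB, hC, by linarith, hy2.symm⟩

lemma uIcc_split {a b c r : ℝ} (h : r ∈ Set.uIcc a c) :
    r ∈ Set.uIcc a b ∨ r ∈ Set.uIcc b c := by
  simp only [Set.mem_uIcc] at h ⊢
  rcases h with ⟨h1, h2⟩ | ⟨h1, h2⟩ <;> rcases le_total r b with hb | hb
  · exact Or.inl (Or.inl ⟨h1, hb⟩)
  · exact Or.inr (Or.inl ⟨hb, h2⟩)
  · exact Or.inr (Or.inr ⟨h1, hb⟩)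
  · exact Or.inl (Or.inr ⟨hb, h2⟩)

lemma seg_subset_hull3 (u v w : ℂ) :
    segment ℝ u w ⊆ convexHull ℝ ({u, v, w} : Set ℂ) := by
  rw [← convexHull_pair]
  apply convexHull_mono
  intro x hx
  rcases hx with rfl | rfl
  · exact Set.mem_insert _ _
  · simp

lemma geom {u v w s t z : ℂ}
    (hs : s ∉ convexHull ℝ ({u, v, w} : Set ℂ))
    (ht : t ∉ convexHull ℝ ({u, v, w} : Set ℂ))
    (hz1 : z ∈ segment ℝ u w) (hz2 : z ∈ segment ℝ s t) :
    (∃ y, y ∈ segment ℝ s t ∧ (y ∈ segment ℝ u v ∨ y ∈ segment ℝ v w)) ∨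
      u ∈ segment ℝ s t ∨ w ∈ segment ℝ s t := by
  set T := convexHull ℝ ({u, v, w} : Set ℂ) with hT
  have hzT : z ∈ T := seg_subset_hull3 u v w hz1
  by_cases hzu : z = u
  · right; left; exact hzu ▸ hz2
  by_cases hzw : z = w
  · right; right; exact hzw ▸ hz2
  by_cases hd : xdet (v - u) (w - u) = 0
  · -- degenerate (collinear) triangle
    by_cases huv : u = v
    · left; exact ⟨z, hz2, Or.inr (huv ▸ hz1)⟩
    by_cases hvw : v = w
    · left; exact ⟨z, hz2, Or.inl (hvw ▸ hz1)⟩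
    have hcol := xdet_zero_collinear hd
    obtain ⟨dir, hdir⟩ := (collinear_iff_of_mem (Set.mem_insert u ({v, w} : Set ℂ))).mp hcol
    obtain ⟨rv, hrv⟩ := hdir v (by simp)
    obtain ⟨rw', hrw⟩ := hdir w (by simp)
    have hveq : v = u + rv • dir := by rw [hrv, vadd_eq_add]; ring
    have hweq : w = u + rw' • dir := by rw [hrw, vadd_eq_add]; ring
    obtain ⟨θ, hθ0, hθ1, hzeq⟩ := mem_seg_param hz1
    have hwu : w - u = rw' • dir := by rw [hweq]; ring
    have hzp : z = u + (θ * rw') • dir := by rw [hzeq, hwu, smul_smul]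
    have hmem : θ * rw' ∈ Set.uIcc (0 : ℝ) rw' := by
      rcases le_total 0 rw' with hc | hc
      · rw [Set.uIcc_of_le hc]
        constructor
        · exact mul_nonneg hθ0 hc
        · nlinarith
      · rw [Set.uIcc_of_ge hc]
        constructor
        · nlinarith
        · exact mul_nonpos_iff.mpr (Or.inl ⟨hθ0, hc⟩)
    left
    refine ⟨z, hz2, ?_⟩
    rcases uIcc_split (b := rv) hmem with hm | hm
    · left
      have h00 : u + (0:ℝ) • dir = u := by simp
      have hmm := seg_param_mem_uIcc u dir (p := 0) (q := rv) hm
      rw [h00, ← hveq] at hmm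
      rwa [hzp]
    · right
      have hmm := seg_param_mem_uIcc u dir (p := rv) (q := rw') hm
      rw [← hveq, ← hweq] at hmm
      rwa [hzp]
  · -- nondegenerate triangle
    have huw : u ≠ w := fun h => hd (by rw [h]; simp [xdet])
    obtain ⟨θ, hθ0, hθ1, hzeq⟩ := seg_extract hz1
    have hθ0' : 0 < θ := by
      rcases lt_or_eq_of_le hθ0 with h | h
      · exact h
      · exfalso; apply hzu; rw [hzeq, ← h]; simp
    have hθ1' : θ < 1 := by
      rcases lt_or_eq_of_le hθ1 with h | h
      · exact h
      · exfalso; apply hzw; rw [hzeq, h]; simp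
    have hBz : Bc u v w z = 0 := by
      rw [hzeq, Bc_affine (by ring), Bc_u, Bc_w]; ring
    have hAz : Ac u v w z = 1 - θ := by
      rw [hzeq, Ac_affine (by ring), Ac_u hd, Ac_w hd]; ring
    have hCz : Cc u v w z = θ := by
      rw [hzeq, Cc_affine (by ring), Cc_u, Cc_w hd]; ring
    have main : ∀ s' : ℂ, s' ∉ T → 0 < Bc u v w s' →
        ∃ y, y ∈ segment ℝ s' z ∧ (y ∈ segment ℝ u v ∨ y ∈ segment ℝ v w) := by
      intro s' hs' hB
      set A' := Ac u v w s' with hA'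
      set C' := Cc u v w s' with hC'
      set ε := min (1/2 : ℝ)
        (min ((1 - θ) / (2 * (|A'| + 1))) (θ / (2 * (|C'| + 1)))) with hεdef
      have hε0 : 0 < ε := by
        apply lt_min (by norm_num)
        exact lt_min (div_pos (by linarith) (by positivity)) (div_pos hθ0' (by positivity))
      have hε1 : ε ≤ 1/2 := min_le_left _ _
      have hεA : ε * (2 * (|A'| + 1)) ≤ 1 - θ := by
        have h1 : ε ≤ (1 - θ) / (2 * (|A'| + 1)) :=
          le_trans (min_le_right _ _) (min_le_left _ _)
        exact (le_div_iff₀ (by positivity)).mp h1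
      have hεC : ε * (2 * (|C'| + 1)) ≤ θ := by
        have h1 : ε ≤ θ / (2 * (|C'| + 1)) :=
          le_trans (min_le_right _ _) (min_le_right _ _)
        exact (le_div_iff₀ (by positivity)).mp h1
      set zε := ε • s' + (1 - ε) • z with hzε
      have hBzε : Bc u v w zε = ε * Bc u v w s' := by
        rw [hzε, Bc_affine (by ring), hBz]; ring
      have hAzε : 0 ≤ Ac u v w zε := by
        rw [hzε, Ac_affine (by ring), hAz]
        have p1 : ε * (-|A'|) ≤ ε * A' := mul_le_mul_of_nonneg_left (neg_abs_le A') hε0.le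
        have p2 : 0 ≤ (1 - 2*ε) * (1 - θ) :=
          mul_nonneg (by linarith) (by linarith)
        nlinarith [abs_nonneg A']
      have hCzε : 0 ≤ Cc u v w zε := by
        rw [hzε, Cc_affine (by ring), hCz]
        have p1 : ε * (-|C'|) ≤ ε * C' := mul_le_mul_of_nonneg_left (neg_abs_le C') hε0.le
        have p2 : 0 ≤ (1 - 2*ε) * θ :=
          mul_nonneg (by linarith) (by linarith)
        nlinarith [abs_nonneg C']
      have hzεT : zε ∈ T := by
        rw [hT, hull3_eq hd]
        exact ⟨hAzε, by rw [hBzε]; positivity, hCzε⟩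
      have hzεseg : zε ∈ segment ℝ s' z := ⟨ε, 1 - ε, hε0.le, by linarith, by ring, rfl⟩
      obtain ⟨y, hyseg, hyfr⟩ := seg_enter (hT ▸ hull3_closed u v w) hzεT hs'
      have hyB : 0 < Bc u v w y := by
        obtain ⟨μ, hμ0, hμ1, hyeq⟩ := seg_extract hyseg
        have : Bc u v w y = Bc u v w s' * (1 - μ * (1 - ε)) := by
          rw [hyeq, Bc_affine (by ring), hBzε]; ring
        rw [this]
        have key : 0 ≤ Bc u v w s' * ((1 - ε) * (1 - μ)) :=
          mul_nonneg hB.le (mul_nonneg (by linarith) (by linarith))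
        nlinarith [mul_pos hB hε0]
      have hynotuw : y ∉ segment ℝ u w := by
        intro hc
        obtain ⟨ν, hν0, hν1, hyeq⟩ := seg_extract hc
        have : Bc u v w y = 0 := by
          rw [hyeq, Bc_affine (by ring), Bc_u, Bc_w]; ring
        linarith
      have hysides := frontier_tri u v w (hT ▸ hyfr)
      have hyseg' : y ∈ segment ℝ s' z :=
        (convex_segment s' z).segment_subset (left_mem_segment ℝ s' z) hzεseg hyseg
      rcases hysides with (h1 | h1) | h1
      · exact ⟨y, hyseg', Or.inl h1⟩
      · exact ⟨y, hyseg', Or.inr h1⟩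
      · exact absurd h1 hynotuw
    by_cases hBs : 0 < Bc u v w s
    · obtain ⟨y, hy1, hy2⟩ := main s hs hBs
      left
      exact ⟨y, (convex_segment s t).segment_subset (left_mem_segment ℝ s t) hz2 hy1, hy2⟩
    by_cases hBt : 0 < Bc u v w t
    · obtain ⟨y, hy1, hy2⟩ := main t ht hBt
      left
      exact ⟨y, (convex_segment s t).segment_subset (right_mem_segment ℝ s t) hz2 hy1, hy2⟩
    push_neg at hBs hBt
    obtain ⟨μ, hμ0, hμ1, hzeq2⟩ := seg_extract hz2
    have hBz2 : (1 - μ) * Bc u v w s + μ * Bc u v w t = 0 := by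
      rw [← Bc_affine (by ring : (1 - μ) + μ = 1) s t, ← hzeq2, hBz]
    rcases lt_or_eq_of_le hBs with hBs' | hBs'
    · rcases lt_or_eq_of_le hBt with hBt' | hBt'
      · -- both negative: impossible
        exfalso
        have e1 : (1 - μ) * Bc u v w s ≤ 0 :=
          mul_nonpos_iff.mpr (Or.inl ⟨by linarith, by linarith⟩)
        have e2 : μ * Bc u v w t ≤ 0 :=
          mul_nonpos_iff.mpr (Or.inl ⟨by linarith, by linarith⟩)
        have h10 : (1 - μ) * Bc u v w s = 0 := by linarith
        have h20 : μ * Bc u v w t = 0 := by linarith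
        rcases mul_eq_zero.mp h10 with hh | hh
        · rcases mul_eq_zero.mp h20 with hh' | hh' <;> linarith
        · linarith
      · -- Bc s < 0, Bc t = 0 : z = t
        exfalso
        rw [hBt', mul_zero, add_zero] at hBz2
        have hμ1' : μ = 1 := by
          rcases mul_eq_zero.mp hBz2 with hh | hh
          · linarith
          · linarith
        have hzt : z = t := by rw [hzeq2, hμ1']; simp
        exact ht (hzt ▸ hzT)
    · rcases lt_or_eq_of_le hBt with hBt' | hBt'
      · -- Bc s = 0, Bc t < 0 : z = s
        exfalso
        rw [hBs', mul_zero, zero_add] at hBz2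
        have hμ0' : μ = 0 := by
          rcases mul_eq_zero.mp hBz2 with hh | hh
          · exact hh
          · linarith
        have hzs : z = s := by rw [hzeq2, hμ0']; simp
        exact hs (hzs ▸ hzT)
      · -- both zero : everything on the line u w
        right; left
        have hds : xdet (s - u) (w - u) = 0 := by
          have h0 : xdet (s - u) (w - u) / xdet (v - u) (w - u) = 0 := hBs'
          rcases div_eq_zero_iff.mp h0 with h | h
          · exact h
          · exact absurd h hd
        have hdt : xdet (t - u) (w - u) = 0 := by
          have h0 : xdet (t - u) (w - u) / xdet (v - u) (w - u) = 0 := hBt'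
          rcases div_eq_zero_iff.mp h0 with h | h
          · exact h
          · exact absurd h hd
        exact oned huw hds hdt hz1 hz2
          (fun hc => hs (seg_subset_hull3 u v w hc))
          (fun hc => ht (seg_subset_hull3 u v w hc))

end NCF
end

open Finset in
lemma NCF.cara3 {S : Set ℂ} {x : ℂ} (hx : x ∈ convexHull ℝ S) :
    (∃ p ∈ S, x = p) ∨ (∃ p ∈ S, ∃ q ∈ S, x ∈ segment ℝ p q) ∨
    (∃ p ∈ S, ∃ q ∈ S, ∃ r ∈ S, x ∈ convexHull ℝ ({p, q, r} : Set ℂ)) := by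
  rw [convexHull_eq_union] at hx
  simp only [Set.mem_iUnion] at hx
  obtain ⟨t, hts, hai, hxt⟩ := hx
  have hcard : t.card ≤ 3 := by
    by_contra hc
    push_neg at hc
    have hne : Nonempty ↑t := by
      have := Finset.card_pos.mp (lt_trans (by norm_num) hc)
      exact Set.Nonempty.to_subtype this
    have h1 := hai.finrank_vectorSpan_add_one
    have h2 : Module.finrank ℝ (vectorSpan ℝ (Set.range ((↑) : ↑t → ℂ))) ≤ Module.finrank ℝ ℂ :=
      Submodule.finrank_le _
    rw [Complex.finrank_real_complex] at h2
    rw [Fintype.card_coe] at h1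
    rw [← h1] at hc
    omega
  have hcases : t.card = 0 ∨ t.card = 1 ∨ t.card = 2 ∨ t.card = 3 := by omega
  rcases hcases with h | h | h | h
  · rw [Finset.card_eq_zero] at h
    subst h
    simp at hxt
  · obtain ⟨p, rfl⟩ := Finset.card_eq_one.mp h
    left
    refine ⟨p, hts (by simp), ?_⟩
    simpa using hxt
  · obtain ⟨p, q, hpq, rfl⟩ := Finset.card_eq_two.mp h
    right; left
    refine ⟨p, hts (by simp), q, hts (by simp), ?_⟩
    rw [← convexHull_pair]
    simpa using hxt
  · obtain ⟨p, q, r, h1, h2, h3, rfl⟩ := Finset.card_eq_three.mp h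
    right; right
    refine ⟨p, hts (by simp), q, hts (by simp), r, hts (by simp), ?_⟩
    simpa using hxt

lemma NCF.walk_reach_induce {V : Type*} {G : SimpleGraph V} {S : Set V} :
    ∀ {c d : V} (w : G.Walk c d) (hsup : ∀ x ∈ w.support, x ∈ S),
      (G.induce S).Reachable ⟨c, hsup c w.start_mem_support⟩ ⟨d, hsup d w.end_mem_support⟩ := by
  intro c d w
  induction w with
  | nil => intro _; rfl
  | cons h p ih =>
    intro hsup
    have hsup' : ∀ x ∈ p.support, x ∈ S := fun x hx =>
      hsup x (by rw [SimpleGraph.Walk.support_cons]; exact List.mem_cons_of_mem _ hx)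
    refine SimpleGraph.Reachable.trans (SimpleGraph.Adj.reachable ?_) (ih hsup')
    exact h

lemma NCF.comp_connected {V : Type*} (G : SimpleGraph V) (a : V) :
    (G.induce {c | G.Reachable a c}).Connected := by
  rw [SimpleGraph.connected_iff]
  constructor
  · rintro ⟨c, hc⟩ ⟨d, hd⟩
    obtain ⟨w1⟩ := hc
    obtain ⟨w2⟩ := hd
    set w := w1.reverse.append w2 with hw
    have hsup : ∀ x ∈ w.support, x ∈ {c | G.Reachable a c} := by
      intro x hx
      have hcx : G.Reachable c x := (w.takeUntil x hx).reachable
      exact Set.mem_setOf_eq ▸ (SimpleGraph.Reachable.trans ⟨w1⟩ hcx)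
    exact NCF.walk_reach_induce w hsup
  · exact ⟨⟨a, SimpleGraph.Reachable.refl a⟩⟩

lemma NCF.cblock_eq {P : Finset ℂ} (G : SimpleGraph (Vtx P)) (a : Vtx P) :
    cblock (partOf G) a = Subtype.val '' {c | G.Reachable a c} := by
  ext w
  constructor
  · rintro ⟨b, h1, rfl⟩
    exact ⟨b, h1, rfl⟩
  · rintro ⟨b, h1, rfl⟩
    exact ⟨b, h1, rfl⟩

lemma NCF.reach_of_mem_hull {P : Finset ℂ} {G : SimpleGraph (Vtx P)}
    (hcg : ConvexGeodesics P G) (a v : Vtx P)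
    (hv : (v : ℂ) ∈ convexHull ℝ (Subtype.val '' {c | G.Reachable a c})) : G.Reachable a v :=
  hcg _ (NCF.comp_connected G a) v hv

lemma NCF.seg_sub_block {P : Finset ℂ} {G : SimpleGraph (Vtx P)} {a p q : Vtx P}
    (hp : G.Reachable a p) (hq : G.Reachable a q) :
    segment ℝ (p : ℂ) (q : ℂ) ⊆ convexHull ℝ (Subtype.val '' {c | G.Reachable a c}) :=
  (convex_convexHull ℝ _).segment_subset
    (subset_convexHull ℝ _ ⟨p, hp, rfl⟩) (subset_convexHull ℝ _ ⟨q, hq, rfl⟩)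

lemma NCF.tri_sub_block {P : Finset ℂ} {G : SimpleGraph (Vtx P)} {a p q r : Vtx P}
    (hp : G.Reachable a p) (hq : G.Reachable a q) (hr : G.Reachable a r) :
    convexHull ℝ ({(p : ℂ), (q : ℂ), (r : ℂ)} : Set ℂ)
      ⊆ convexHull ℝ (Subtype.val '' {c | G.Reachable a c}) := by
  apply convexHull_mono
  rintro x (rfl | rfl | rfl)
  · exact ⟨p, hp, rfl⟩
  · exact ⟨q, hq, rfl⟩
  · exact ⟨r, hr, rfl⟩

lemma NCF.main_lemma (P : Finset ℂ) (G : SimpleGraph (Vtx P))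
    (hnc : EdgesNoncrossing P G) (hcg : ConvexGeodesics P G) :
    ∀ n : ℕ, ∀ (a a' b b' : Vtx P) (w1 : G.Walk a a') (w2 : G.Walk b b'),
      ¬ G.Reachable a b → w1.length + w2.length ≤ n →
      ∀ z : ℂ, z ∈ segment ℝ (a : ℂ) (a' : ℂ) → z ∈ segment ℝ (b : ℂ) (b' : ℂ) → False := by
  intro n
  induction n using Nat.strong_induction_on with
  | _ n IH =>
  have step : ∀ (a a' b b' : Vtx P) (w1 : G.Walk a a') (w2 : G.Walk b b'),
      ¬ G.Reachable a b → w1.length + w2.length ≤ n → 2 ≤ w1.length →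
      ∀ z : ℂ, z ∈ segment ℝ (a : ℂ) (a' : ℂ) → z ∈ segment ℝ (b : ℂ) (b' : ℂ) → False := by
    intro a a' b b' w1 w2 hab hlen h2 z hz1 hz2
    cases w1 with
    | nil => simp at h2
    | @cons _ c _ hadj w1' =>
      rw [SimpleGraph.Walk.length_cons] at hlen h2
      have hw1'len : 1 ≤ w1'.length := by omega
      have hreach_ac : G.Reachable a c := hadj.reachable
      have hreach_aa' : G.Reachable a a' := hreach_ac.trans w1'.reachable
      have hbB : G.Reachable b b' := w2.reachable
      have hTsub := NCF.tri_sub_block (G := G) (SimpleGraph.Reachable.refl a) hreach_ac hreach_aa'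
      have hbT : (b : ℂ) ∉ convexHull ℝ ({(a : ℂ), (c : ℂ), (a' : ℂ)} : Set ℂ) :=
        fun hc => hab (NCF.reach_of_mem_hull hcg a b (hTsub hc))
      have hb'T : (b' : ℂ) ∉ convexHull ℝ ({(a : ℂ), (c : ℂ), (a' : ℂ)} : Set ℂ) :=
        fun hc => hab ((NCF.reach_of_mem_hull hcg a b' (hTsub hc)).trans hbB.symm)
      rcases NCF.geom hbT hb'T hz1 hz2 with ⟨y, hyst, hy⟩ | h | h
      · rcases hy with hy | hy
        · exact IH (1 + w2.length) (by omega) a c b b'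
            (SimpleGraph.Walk.cons hadj SimpleGraph.Walk.nil) w2 hab (by simp) y hy hyst
        · have hcb : ¬ G.Reachable c b := fun hr => hab (hreach_ac.trans hr)
          exact IH (w1'.length + w2.length) (by omega) c a' b b' w1' w2 hcb le_rfl y hy hyst
      · exact hab (NCF.reach_of_mem_hull hcg b a
          (NCF.seg_sub_block (SimpleGraph.Reachable.refl b) hbB h)).symm
      · exact hab (hreach_aa'.trans (NCF.reach_of_mem_hull hcg b a'
          (NCF.seg_sub_block (SimpleGraph.Reachable.refl b) hbB h)).symm)
  intro a a' b b' w1 w2 hab hlen z hz1 hz2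
  by_cases h1 : 2 ≤ w1.length
  · exact step a a' b b' w1 w2 hab hlen h1 z hz1 hz2
  by_cases h2 : 2 ≤ w2.length
  · exact step b b' a a' w2 w1 (fun h => hab h.symm) (by omega) h2 z hz2 hz1
  push_neg at h1 h2
  cases w1 with
  | nil =>
    have hza : z = (a : ℂ) := by simpa [segment_same] using hz1
    subst hza
    exact hab (NCF.reach_of_mem_hull hcg b a
      (NCF.seg_sub_block (SimpleGraph.Reachable.refl b) w2.reachable hz2)).symm
  | @cons _ c _ hadj w1' =>
    cases w1' with
    | cons h' p' =>
      exfalso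
      rw [SimpleGraph.Walk.length_cons, SimpleGraph.Walk.length_cons] at h1
      omega
    | nil =>
      cases w2 with
      | nil =>
        have hzb : z = (b : ℂ) := by simpa [segment_same] using hz2
        subst hzb
        exact hab (NCF.reach_of_mem_hull hcg a b
          (NCF.seg_sub_block (SimpleGraph.Reachable.refl a) hadj.reachable hz1))
      | @cons _ d _ hadj2 w2' =>
        cases w2' with
        | cons h' p' =>
          exfalso
          rw [SimpleGraph.Walk.length_cons, SimpleGraph.Walk.length_cons] at h2
          omega
        | nil =>
          have hac : G.Reachable a a' := hadj.reachable
          have hbd : G.Reachable b b' := hadj2.reachable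
          have hsets : ({a, a'} : Set (Vtx P)) ≠ {b, b'} := by
            intro heq
            have hamem : a ∈ ({b, b'} : Set (Vtx P)) := heq ▸ Set.mem_insert a {a'}
            rcases hamem with rfl | hamem
            · exact hab (SimpleGraph.Reachable.refl a)
            · rw [Set.mem_singleton_iff] at hamem
              subst hamem
              exact hab hbd.symm
          obtain ⟨e1, e2⟩ := hnc a a' b b' hadj hadj2 hsets z ⟨hz1, hz2⟩
          have hval : Function.Injective (Subtype.val : Vtx P → ℂ) := Subtype.val_injective
          rcases e1 with rfl | rfl <;> rcases e2 with he | he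
          · have heq : a = b := hval he
            subst heq
            exact hab (SimpleGraph.Reachable.refl a)
          · have heq : a = b' := hval he
            subst heq
            exact hab hbd.symm
          · have heq : a' = b := hval he
            subst heq
            exact hab hac
          · have heq : a' = b' := hval he
            subst heq
            exact hab (hac.trans hbd.symm)

/-- If `μ` is a noncrossing forest on `P` with convex geodesics, then the partition
`Part(μ)` of `P` into connected components of `μ` is a noncrossing partition: the
convex hulls of distinct blocks are disjoint. -/
theorem stmt4 (P : Finset ℂ) (G : SimpleGraph (Vtx P))
    (hforest : G.IsAcyclic)
    (hnc : EdgesNoncrossing P G)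
    (hcg : ConvexGeodesics P G) :
    NoncrossingS P (partOf G) := by
  intro a b hab
  have hab' : ¬ G.Reachable a b := hab
  by_contra hnd
  obtain ⟨x, hxa, hxb⟩ := Set.not_disjoint_iff.mp hnd
  rw [NCF.cblock_eq] at hxa hxb
  -- membership of b's block hull
  have core : ∀ (a1 a2 b1 b2 : Vtx P), G.Reachable a a1 → G.Reachable a a2 →
      G.Reachable b b1 → G.Reachable b b2 →
      ∀ y : ℂ, y ∈ segment ℝ (a1 : ℂ) (a2 : ℂ) → y ∈ segment ℝ (b1 : ℂ) (b2 : ℂ) → False := by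
    intro a1 a2 b1 b2 ha1 ha2 hb1 hb2 y hy1 hy2
    obtain ⟨wa⟩ := ha1.symm.trans ha2
    obtain ⟨wb⟩ := hb1.symm.trans hb2
    have hnr : ¬ G.Reachable a1 b1 := fun h => hab' (ha1.trans (h.trans hb1.symm))
    exact NCF.main_lemma P G hnc hcg (wa.length + wb.length) a1 a2 b1 b2 wa wb hnr le_rfl y hy1 hy2
  have stepB : ∀ (a1 a2 : Vtx P), G.Reachable a a1 → G.Reachable a a2 →
      ∀ y : ℂ, y ∈ segment ℝ (a1 : ℂ) (a2 : ℂ) →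
      y ∈ convexHull ℝ (Subtype.val '' {c | G.Reachable b c}) → False := by
    intro a1 a2 ha1 ha2 y hy1 hy2
    rcases NCF.cara3 hy2 with ⟨p, hp, rfl⟩ | ⟨p, hp, q, hq, hseg⟩ | ⟨p, hp, q, hq, r, hr, htri⟩
    · obtain ⟨b1, hb1, rfl⟩ := hp
      have : G.Reachable a b1 := NCF.reach_of_mem_hull hcg a b1
        (NCF.seg_sub_block ha1 ha2 hy1)
      exact hab' (this.trans hb1.symm)
    · obtain ⟨b1, hb1, rfl⟩ := hp
      obtain ⟨b2, hb2, rfl⟩ := hq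
      exact core a1 a2 b1 b2 ha1 ha2 hb1 hb2 y hy1 hseg
    · obtain ⟨b1, hb1, rfl⟩ := hp
      obtain ⟨b2, hb2, rfl⟩ := hq
      obtain ⟨b3, hb3, rfl⟩ := hr
      have hTsub := NCF.tri_sub_block (G := G) hb1 hb2 hb3
      have ha1T : (a1 : ℂ) ∉ convexHull ℝ ({(b1 : ℂ), (b2 : ℂ), (b3 : ℂ)} : Set ℂ) :=
        fun hc => hab' (ha1.trans (NCF.reach_of_mem_hull hcg b a1 (hTsub hc)).symm)
      obtain ⟨y', hy'seg, hy'fr⟩ := NCF.seg_enter (NCF.hull3_closed _ _ _) htri ha1T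
      have hy'y : y' ∈ segment ℝ (a1 : ℂ) (a2 : ℂ) :=
        (convex_segment _ _).segment_subset (left_mem_segment ℝ _ _) hy1 hy'seg
      rcases NCF.frontier_tri _ _ _ hy'fr with (hs | hs) | hs
      · exact core a1 a2 b1 b2 ha1 ha2 hb1 hb2 y' hy'y hs
      · exact core a1 a2 b2 b3 ha1 ha2 hb2 hb3 y' hy'y hs
      · exact core a1 a2 b1 b3 ha1 ha2 hb1 hb3 y' hy'y hs
  rcases NCF.cara3 hxa with ⟨p, hp, rfl⟩ | ⟨p, hp, q, hq, hseg⟩ | ⟨p, hp, q, hq, r, hr, htri⟩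
  · obtain ⟨a1, ha1, rfl⟩ := hp
    exact hab' (ha1.trans (NCF.reach_of_mem_hull hcg b a1 hxb).symm)
  · obtain ⟨a1, ha1, rfl⟩ := hp
    obtain ⟨a2, ha2, rfl⟩ := hq
    exact stepB a1 a2 ha1 ha2 x hseg hxb
  · obtain ⟨a1, ha1, rfl⟩ := hp
    obtain ⟨a2, ha2, rfl⟩ := hq
    obtain ⟨a3, ha3, rfl⟩ := hr
    have hTsub := NCF.tri_sub_block (G := G) ha1 ha2 ha3
    have hbT : (b : ℂ) ∉ convexHull ℝ ({(a1 : ℂ), (a2 : ℂ), (a3 : ℂ)} : Set ℂ) :=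
      fun hc => hab' (NCF.reach_of_mem_hull hcg a b (hTsub hc))
    obtain ⟨y, hyseg, hyfr⟩ := NCF.seg_enter (NCF.hull3_closed _ _ _) htri hbT
    have hyB : y ∈ convexHull ℝ (Subtype.val '' {c | G.Reachable b c}) := by
      have hbmem : (b : ℂ) ∈ convexHull ℝ (Subtype.val '' {c | G.Reachable b c}) :=
        subset_convexHull ℝ _ ⟨b, SimpleGraph.Reachable.refl b, rfl⟩
      exact (convex_convexHull ℝ _).segment_subset hbmem hxb hyseg
    rcases NCF.frontier_tri _ _ _ hyfr with (hs | hs) | hs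
    · exact stepB a1 a2 ha1 ha2 y hs hyB
    · exact stepB a2 a3 ha2 ha3 y hs hyB
    · exact stepB a1 a3 ha1 ha3 y hs hyB
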